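/- There exists a finite constant K such that for every p ∈ (0, 1/2), a geometric random variable R with parameter p satisfies E[|log R − E[log R]|³] ≤ K. -/

import Mathlib

open Real

/-- Core exponential bound transfers to a bound on powers of `|log|`. -/
lemma abs_log_pow_le (k : ℕ) (c : ℝ) (hc : ∀ t : ℝ, 0 ≤ t → t ^ k ≤ c * Real.exp (t / 2))
    (y : ℝ) (hy : 0 < y) : |Real.log y| ^ k ≤ c * (Real.sqrt y + 1 / Real.sqrt y) := by
  have hsy : 0 < Real.sqrt y := Real.sqrt_pos.2 hy
  have hc0 : 0 ≤ c := by
    have h0 := hc 0 le_rfl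
    have he : Real.exp ((0:ℝ) / 2) = 1 := by norm_num [Real.exp_zero]
    rcases Nat.eq_zero_or_pos k with hk | hk
    · have : (1:ℝ) ≤ c := by simpa [hk, he] using h0
      linarith
    · have : (0:ℝ) ≤ c * 1 := by simpa [zero_pow hk.ne', he] using h0
      linarith
  rcases le_or_gt 1 y with h1 | h1
  · have hl : 0 ≤ Real.log y := Real.log_nonneg h1
    have hexp : Real.exp (Real.log y / 2) = Real.sqrt y := by
      rw [Real.exp_half, Real.exp_log hy]
    have h2 := hc (Real.log y) hl
    rw [abs_of_nonneg hl]
    have : 0 ≤ c * (1 / Real.sqrt y) := by positivity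
    calc Real.log y ^ k ≤ c * Real.exp (Real.log y / 2) := h2
      _ = c * Real.sqrt y := by rw [hexp]
      _ ≤ c * (Real.sqrt y + 1 / Real.sqrt y) := by nlinarith
  · have hinv : (1:ℝ) < y⁻¹ := (one_lt_inv₀ hy).2 h1
    have hl : 0 ≤ Real.log y⁻¹ := Real.log_nonneg hinv.le
    have habs : |Real.log y| = Real.log y⁻¹ := by
      rw [Real.log_inv, abs_of_nonpos (Real.log_nonpos hy.le h1.le)]
    have hexp : Real.exp (Real.log y⁻¹ / 2) = 1 / Real.sqrt y := by
      rw [Real.exp_half, Real.exp_log (by positivity), Real.sqrt_inv, one_div]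
    have h2 := hc (Real.log y⁻¹) hl
    rw [habs]
    have : 0 ≤ c * Real.sqrt y := by positivity
    calc Real.log y⁻¹ ^ k ≤ c * Real.exp (Real.log y⁻¹ / 2) := h2
      _ = c * (1 / Real.sqrt y) := by rw [hexp]
      _ ≤ c * (Real.sqrt y + 1 / Real.sqrt y) := by nlinarith

lemma abs_log_le' (y : ℝ) (hy : 0 < y) :
    |Real.log y| ≤ 2 * (Real.sqrt y + 1 / Real.sqrt y) := by
  have := abs_log_pow_le 1 2 (fun t ht => by
    have h := Real.add_one_le_exp (t / 2)
    nlinarith) y hy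
  simpa using this

lemma abs_log_cube_le (y : ℝ) (hy : 0 < y) :
    |Real.log y| ^ 3 ≤ 216 * (Real.sqrt y + 1 / Real.sqrt y) := by
  refine abs_log_pow_le 3 216 (fun t ht => ?_) y hy
  have h := Real.add_one_le_exp (t / 6)
  have h2 : Real.exp (t / 2) = Real.exp (t / 6) ^ 3 := by
    rw [← Real.exp_nat_mul]; congr 1; push_cast; ring
  have h3 : t / 6 ≤ Real.exp (t / 6) := by linarith
  have h4 : (t / 6) ^ 3 ≤ Real.exp (t / 6) ^ 3 := by
    apply pow_le_pow_left₀ (by positivity) h3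
  rw [h2]; nlinarith

set_option maxHeartbeats 1600000 in
theorem geometric_log_third_moment :
    ∃ K : ℝ, ∀ p : ℝ, 0 < p → p < 1 / 2 →
      (∑' n : ℕ, |Real.log ((n : ℝ) + 1) -
          ∑' m : ℕ, Real.log ((m : ℝ) + 1) * (p * (1 - p) ^ m)| ^ 3 *
        (p * (1 - p) ^ n)) ≤ K := by
  use 3456
  intro p hp hp2
  set q : ℝ := 1 - p with hq
  have hq0 : 0 ≤ q := by simp [hq]; linarith
  have hq1 : q < 1 := by simp [hq]; linarith
  have hsp : 0 < Real.sqrt p := Real.sqrt_pos.2 hp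
  have hsp2 : Real.sqrt p * Real.sqrt p = p := Real.mul_self_sqrt hp.le
  -- geometric sums
  have hsumgeo : Summable (fun n : ℕ => q ^ n) := summable_geometric_of_lt_one hq0 hq1
  have htsumgeo : ∑' n : ℕ, q ^ n = 1 / p := by
    rw [tsum_geometric_of_lt_one hq0 hq1]; simp [hq]
  have hsum1 : Summable (fun n : ℕ => ((n : ℝ) + 1) * q ^ n) := by
    have h1 : Summable (fun n : ℕ => (n : ℝ) * q ^ n) := by
      have := summable_pow_mul_geometric_of_norm_lt_one 1 (r := q)
        (by rw [Real.norm_eq_abs, abs_of_nonneg hq0]; exact hq1)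
      simpa using this
    simpa [add_mul] using h1.add hsumgeo
  have htsum1 : ∑' n : ℕ, ((n : ℝ) + 1) * q ^ n = 1 / p ^ 2 := by
    have h1 : Summable (fun n : ℕ => (n : ℝ) * q ^ n) := by
      have := summable_pow_mul_geometric_of_norm_lt_one 1 (r := q)
        (by rw [Real.norm_eq_abs, abs_of_nonneg hq0]; exact hq1)
      simpa using this
    have hq' : ‖q‖ < 1 := by rw [Real.norm_eq_abs, abs_of_nonneg hq0]; exact hq1
    have e1 : ∑' n : ℕ, (n : ℝ) * q ^ n = q / (1 - q) ^ 2 :=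
      tsum_coe_mul_geometric_of_norm_lt_one hq'
    calc ∑' n : ℕ, ((n : ℝ) + 1) * q ^ n
        = (∑' n : ℕ, (n : ℝ) * q ^ n) + ∑' n : ℕ, q ^ n := by
          rw [← Summable.tsum_add h1 hsumgeo]; congr 1; ext n; ring
      _ = q / (1 - q) ^ 2 + 1 / p := by rw [e1, htsumgeo]
      _ = 1 / p ^ 2 := by
          have : 1 - q = p := by simp [hq]
          rw [this]; field_simp [hq]; ring
  -- sqrt sums
  have hsqrt_le : ∀ n : ℕ, Real.sqrt ((n : ℝ) + 1) ≤
      (((n : ℝ) + 1) * Real.sqrt p + 1 / Real.sqrt p) / 2 := by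
    intro n
    have hn1 : (0:ℝ) ≤ (n : ℝ) + 1 := by positivity
    have hs := Real.sq_sqrt hn1
    have hsn := Real.sqrt_nonneg ((n : ℝ) + 1)
    rw [le_div_iff₀ (by norm_num : (0:ℝ) < 2)]
    have h1r : 1 / Real.sqrt p * Real.sqrt p = 1 := by field_simp
    nlinarith [sq_nonneg (Real.sqrt ((n:ℝ)+1) * Real.sqrt p - 1), hsp, hs, hsn,
      Real.sqrt_nonneg p]
  have hsumS : Summable (fun n : ℕ => Real.sqrt ((n : ℝ) + 1) * q ^ n) := by
    apply Summable.of_nonneg_of_le (fun n => by positivity)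
      (fun n => ?_) hsum1
    have hs1 : 1 ≤ Real.sqrt ((n:ℝ)+1) := Real.one_le_sqrt.2 (by push_cast; linarith)
    have h1 : Real.sqrt ((n : ℝ) + 1) ≤ (n : ℝ) + 1 := by
      nlinarith [Real.sq_sqrt (show (0:ℝ) ≤ (n:ℝ)+1 by positivity)]
    exact mul_le_mul_of_nonneg_right h1 (by positivity)
  have hS_le : ∑' n : ℕ, Real.sqrt ((n : ℝ) + 1) * q ^ n ≤ 1 / (p * Real.sqrt p) := by
    have hmaj : Summable (fun n : ℕ =>
        ((((n : ℝ) + 1) * Real.sqrt p + 1 / Real.sqrt p) / 2) * q ^ n) := by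
      apply Summable.of_nonneg_of_le (fun n => by positivity) (fun n => le_refl _) ?_
      have : (fun n : ℕ => ((((n : ℝ) + 1) * Real.sqrt p + 1 / Real.sqrt p) / 2) * q ^ n)
          = fun n : ℕ => (Real.sqrt p / 2) * (((n : ℝ) + 1) * q ^ n)
            + (1 / Real.sqrt p / 2) * q ^ n := by
        ext n; ring
      rw [this]
      exact ((hsum1.mul_left _).add (hsumgeo.mul_left _))
    calc ∑' n : ℕ, Real.sqrt ((n : ℝ) + 1) * q ^ n
        ≤ ∑' n : ℕ, ((((n : ℝ) + 1) * Real.sqrt p + 1 / Real.sqrt p) / 2) * q ^ n := by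
          apply Summable.tsum_le_tsum (fun n => mul_le_mul_of_nonneg_right (hsqrt_le n) (by positivity))
            hsumS hmaj
      _ = (Real.sqrt p / 2) * (∑' n : ℕ, ((n : ℝ) + 1) * q ^ n)
            + (1 / Real.sqrt p / 2) * (∑' n : ℕ, q ^ n) := by
          rw [← tsum_mul_left, ← tsum_mul_left,
            ← Summable.tsum_add (hsum1.mul_left _) (hsumgeo.mul_left _)]
          congr 1; ext n; ring
      _ = 1 / (p * Real.sqrt p) := by
          rw [htsum1, htsumgeo]
          have hps : p = Real.sqrt p ^ 2 := (Real.sq_sqrt hp.le).symm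
          rw [hps]
          generalize Real.sqrt p = s at hsp ⊢
          field_simp
          rw [Real.sq_sqrt (by positivity)]; ring
  -- shifted sqrt sum
  have hsumS' : Summable (fun n : ℕ => Real.sqrt (n : ℝ) * q ^ n) := by
    apply Summable.of_nonneg_of_le (fun n => by positivity) (fun n => ?_) hsumS
    exact mul_le_mul_of_nonneg_right
      (Real.sqrt_le_sqrt (by push_cast; linarith)) (by positivity)
  have hshift : ∑' n : ℕ, Real.sqrt (n : ℝ) * q ^ n
      = q * ∑' n : ℕ, Real.sqrt ((n : ℝ) + 1) * q ^ n := by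
    rw [Summable.tsum_eq_zero_add hsumS']
    simp only [Nat.cast_zero, Real.sqrt_zero, zero_mul, zero_add]
    rw [← tsum_mul_left]
    congr 1; ext n
    push_cast
    rw [pow_succ]
    ring
  -- inverse sqrt sum
  have hinv_le : ∀ n : ℕ, 1 / Real.sqrt ((n : ℝ) + 1) ≤
      2 * (Real.sqrt ((n : ℝ) + 1) - Real.sqrt (n : ℝ)) := by
    intro n
    have ha := Real.sq_sqrt (show (0:ℝ) ≤ (n : ℝ) + 1 by positivity)
    have hb := Real.sq_sqrt (show (0:ℝ) ≤ (n : ℝ) by positivity)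
    have ha0 : 0 < Real.sqrt ((n : ℝ) + 1) := Real.sqrt_pos.2 (by positivity)
    have hb0 : 0 ≤ Real.sqrt (n : ℝ) := Real.sqrt_nonneg _
    rw [div_le_iff₀ ha0]
    nlinarith [sq_nonneg (Real.sqrt ((n:ℝ)+1) - Real.sqrt (n:ℝ))]
  have hsumI : Summable (fun n : ℕ => (1 / Real.sqrt ((n : ℝ) + 1)) * q ^ n) := by
    apply Summable.of_nonneg_of_le (fun n => by positivity) (fun n => ?_) hsumgeo
    have h1 : 1 / Real.sqrt ((n : ℝ) + 1) ≤ 1 := by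
      rw [div_le_one (Real.sqrt_pos.2 (by positivity))]
      exact Real.one_le_sqrt.2 (by push_cast; linarith)
    calc (1 / Real.sqrt ((n : ℝ) + 1)) * q ^ n ≤ 1 * q ^ n :=
        mul_le_mul_of_nonneg_right h1 (by positivity)
      _ = q ^ n := one_mul _
  have hI_le : ∑' n : ℕ, (1 / Real.sqrt ((n : ℝ) + 1)) * q ^ n ≤ 2 / Real.sqrt p := by
    have hdiffsum : Summable (fun n : ℕ =>
        2 * (Real.sqrt ((n : ℝ) + 1) - Real.sqrt (n : ℝ)) * q ^ n) := by
      have : (fun n : ℕ => 2 * (Real.sqrt ((n : ℝ) + 1) - Real.sqrt (n : ℝ)) * q ^ n)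
          = fun n : ℕ => 2 * (Real.sqrt ((n : ℝ) + 1) * q ^ n) - 2 * (Real.sqrt (n : ℝ) * q ^ n) := by
        ext n; ring
      rw [this]
      exact (hsumS.mul_left 2).sub (hsumS'.mul_left 2)
    calc ∑' n : ℕ, (1 / Real.sqrt ((n : ℝ) + 1)) * q ^ n
        ≤ ∑' n : ℕ, 2 * (Real.sqrt ((n : ℝ) + 1) - Real.sqrt (n : ℝ)) * q ^ n := by
          apply Summable.tsum_le_tsum (fun n => mul_le_mul_of_nonneg_right (hinv_le n) (by positivity))
            hsumI hdiffsum
      _ = 2 * ((∑' n : ℕ, Real.sqrt ((n : ℝ) + 1) * q ^ n)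
            - ∑' n : ℕ, Real.sqrt (n : ℝ) * q ^ n) := by
          rw [← Summable.tsum_sub hsumS hsumS', ← tsum_mul_left]
          congr 1; ext n; ring
      _ = 2 * (1 - q) * (∑' n : ℕ, Real.sqrt ((n : ℝ) + 1) * q ^ n) := by
          rw [hshift]; ring
      _ ≤ 2 * p * (1 / (p * Real.sqrt p)) := by
          have h1q : 1 - q = p := by simp [hq]
          rw [h1q]
          apply mul_le_mul_of_nonneg_left hS_le (by positivity)
      _ = 2 / Real.sqrt p := by
          have hps : p = Real.sqrt p ^ 2 := (Real.sq_sqrt hp.le).symm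
          rw [hps]
          generalize Real.sqrt p = s at hsp ⊢
          field_simp
  -- the combined weight function
  set g : ℕ → ℝ := fun n => Real.sqrt (((n : ℝ) + 1) * p) + 1 / Real.sqrt (((n : ℝ) + 1) * p)
    with hgdef
  have hgeq : ∀ n : ℕ, g n = Real.sqrt p * Real.sqrt ((n : ℝ) + 1)
      + (1 / Real.sqrt p) * (1 / Real.sqrt ((n : ℝ) + 1)) := by
    intro n
    have h1 : Real.sqrt (((n : ℝ) + 1) * p) = Real.sqrt ((n : ℝ) + 1) * Real.sqrt p :=
      Real.sqrt_mul (by positivity) p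
    have hn0 : 0 < Real.sqrt ((n : ℝ) + 1) := Real.sqrt_pos.2 (by positivity)
    rw [hgdef]
    simp only [h1]
    rw [mul_comm (Real.sqrt ((n : ℝ) + 1)) (Real.sqrt p)]
    congr 1
    field_simp
  have hsumG : Summable (fun n : ℕ => g n * q ^ n) := by
    have : (fun n : ℕ => g n * q ^ n) = fun n : ℕ =>
        Real.sqrt p * (Real.sqrt ((n : ℝ) + 1) * q ^ n)
          + (1 / Real.sqrt p) * ((1 / Real.sqrt ((n : ℝ) + 1)) * q ^ n) := by
      ext n; rw [hgeq n]; ring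
    rw [this]
    exact (hsumS.mul_left _).add (hsumI.mul_left _)
  have hgnonneg : ∀ n : ℕ, 0 ≤ g n := by
    intro n; rw [hgdef]; positivity
  have hG_le : ∑' n : ℕ, g n * q ^ n ≤ 3 / p := by
    have heq : ∑' n : ℕ, g n * q ^ n
        = Real.sqrt p * (∑' n : ℕ, Real.sqrt ((n : ℝ) + 1) * q ^ n)
          + (1 / Real.sqrt p) * (∑' n : ℕ, (1 / Real.sqrt ((n : ℝ) + 1)) * q ^ n) := by
      rw [← tsum_mul_left, ← tsum_mul_left,
        ← Summable.tsum_add (hsumS.mul_left _) (hsumI.mul_left _)]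
      congr 1; ext n; rw [hgeq n]; ring
    rw [heq]
    have h1 : Real.sqrt p * (∑' n : ℕ, Real.sqrt ((n : ℝ) + 1) * q ^ n)
        ≤ Real.sqrt p * (1 / (p * Real.sqrt p)) :=
      mul_le_mul_of_nonneg_left hS_le hsp.le
    have h2 : (1 / Real.sqrt p) * (∑' n : ℕ, (1 / Real.sqrt ((n : ℝ) + 1)) * q ^ n)
        ≤ (1 / Real.sqrt p) * (2 / Real.sqrt p) :=
      mul_le_mul_of_nonneg_left hI_le (by positivity)
    have e1 : Real.sqrt p * (1 / (p * Real.sqrt p)) = 1 / p := by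
      field_simp
    have e2 : (1 / Real.sqrt p) * (2 / Real.sqrt p) = 2 / p := by
      rw [div_mul_div_comm, one_mul, hsp2]
    rw [e1] at h1; rw [e2] at h2
    have : (1:ℝ) / p + 2 / p = 3 / p := by ring
    linarith
  -- the log bounds
  set B : ℕ → ℝ := fun n => |Real.log (((n : ℝ) + 1) * p)| with hBdef
  have hBnonneg : ∀ n, 0 ≤ B n := fun n => abs_nonneg _
  have hypos : ∀ n : ℕ, (0:ℝ) < ((n : ℝ) + 1) * p := fun n => by positivity
  have hB1 : ∀ n : ℕ, B n ≤ 2 * g n := fun n => abs_log_le' _ (hypos n)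
  have hB3 : ∀ n : ℕ, B n ^ 3 ≤ 216 * g n := fun n => abs_log_cube_le _ (hypos n)
  -- summability of the weighted log sums
  have hsumB : Summable (fun n : ℕ => B n * (p * q ^ n)) := by
    apply Summable.of_nonneg_of_le (fun n => by
      have := hBnonneg n; positivity) (fun n => ?_) ((hsumG.mul_left (2 * p)))
    calc B n * (p * q ^ n) ≤ (2 * g n) * (p * q ^ n) :=
        mul_le_mul_of_nonneg_right (hB1 n) (by positivity)
      _ = 2 * p * (g n * q ^ n) := by ring
  have hsumB3 : Summable (fun n : ℕ => B n ^ 3 * (p * q ^ n)) := by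
    apply Summable.of_nonneg_of_le (fun n => by
      have := hBnonneg n; positivity) (fun n => ?_) ((hsumG.mul_left (216 * p)))
    calc B n ^ 3 * (p * q ^ n) ≤ (216 * g n) * (p * q ^ n) :=
        mul_le_mul_of_nonneg_right (hB3 n) (by positivity)
      _ = 216 * p * (g n * q ^ n) := by ring
  have htB : ∑' n : ℕ, B n * (p * q ^ n) ≤ 6 := by
    calc ∑' n : ℕ, B n * (p * q ^ n) ≤ ∑' n : ℕ, 2 * p * (g n * q ^ n) := by
          apply Summable.tsum_le_tsum (fun n => ?_) hsumB (hsumG.mul_left _)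
          calc B n * (p * q ^ n) ≤ (2 * g n) * (p * q ^ n) :=
              mul_le_mul_of_nonneg_right (hB1 n) (by positivity)
            _ = 2 * p * (g n * q ^ n) := by ring
      _ = 2 * p * ∑' n : ℕ, g n * q ^ n := tsum_mul_left
      _ ≤ 2 * p * (3 / p) := mul_le_mul_of_nonneg_left hG_le (by positivity)
      _ = 6 := by field_simp; ring
  have htB3 : ∑' n : ℕ, B n ^ 3 * (p * q ^ n) ≤ 648 := by
    calc ∑' n : ℕ, B n ^ 3 * (p * q ^ n) ≤ ∑' n : ℕ, 216 * p * (g n * q ^ n) := by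
          apply Summable.tsum_le_tsum (fun n => ?_) hsumB3 (hsumG.mul_left _)
          calc B n ^ 3 * (p * q ^ n) ≤ (216 * g n) * (p * q ^ n) :=
              mul_le_mul_of_nonneg_right (hB3 n) (by positivity)
            _ = 216 * p * (g n * q ^ n) := by ring
      _ = 216 * p * ∑' n : ℕ, g n * q ^ n := tsum_mul_left
      _ ≤ 216 * p * (3 / p) := mul_le_mul_of_nonneg_left hG_le (by positivity)
      _ = 648 := by field_simp; ring
  -- the mean
  set μ : ℝ := ∑' m : ℕ, Real.log ((m : ℝ) + 1) * (p * q ^ m) with hμdef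
  have hlogsplit : ∀ m : ℕ, Real.log (((m : ℝ) + 1) * p)
      = Real.log ((m : ℝ) + 1) + Real.log p := fun m =>
    Real.log_mul (by positivity) hp.ne'
  have hsumL : Summable (fun m : ℕ => Real.log (((m : ℝ) + 1) * p) * (p * q ^ m)) := by
    rw [← summable_abs_iff]
    have : (fun m : ℕ => |Real.log (((m : ℝ) + 1) * p) * (p * q ^ m)|)
        = fun m : ℕ => B m * (p * q ^ m) := by
      ext m
      rw [abs_mul, abs_of_nonneg (by positivity : (0:ℝ) ≤ p * q ^ m)]
    rw [this]
    exact hsumB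
  have hsumlog : Summable (fun m : ℕ => Real.log ((m : ℝ) + 1) * (p * q ^ m)) := by
    have : (fun m : ℕ => Real.log ((m : ℝ) + 1) * (p * q ^ m))
        = fun m : ℕ => Real.log (((m : ℝ) + 1) * p) * (p * q ^ m)
          - (Real.log p * p) * q ^ m := by
      ext m; rw [hlogsplit m]; ring
    rw [this]
    exact hsumL.sub (hsumgeo.mul_left _)
  have hmean : |μ + Real.log p| ≤ 6 := by
    have hsplit : ∑' m : ℕ, Real.log (((m : ℝ) + 1) * p) * (p * q ^ m)
        = μ + Real.log p := by
      have e0 : (fun m : ℕ => Real.log (((m : ℝ) + 1) * p) * (p * q ^ m))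
          = fun m : ℕ => Real.log ((m : ℝ) + 1) * (p * q ^ m)
            + (Real.log p * p) * q ^ m := by
        ext m; rw [hlogsplit m]; ring
      rw [e0, Summable.tsum_add hsumlog (hsumgeo.mul_left _), tsum_mul_left, htsumgeo, ← hμdef]
      congr 1
      field_simp
    rw [← hsplit]
    have habs : ‖∑' m : ℕ, Real.log (((m : ℝ) + 1) * p) * (p * q ^ m)‖
        ≤ ∑' m : ℕ, ‖Real.log (((m : ℝ) + 1) * p) * (p * q ^ m)‖ := by
      apply norm_tsum_le_tsum_norm
      have : (fun m : ℕ => ‖Real.log (((m : ℝ) + 1) * p) * (p * q ^ m)‖)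
          = fun m : ℕ => B m * (p * q ^ m) := by
        ext m
        rw [Real.norm_eq_abs, abs_mul, abs_of_nonneg (by positivity : (0:ℝ) ≤ p * q ^ m)]
      rw [this]; exact hsumB
    rw [Real.norm_eq_abs] at habs
    have : ∑' m : ℕ, ‖Real.log (((m : ℝ) + 1) * p) * (p * q ^ m)‖
        = ∑' m : ℕ, B m * (p * q ^ m) := by
      congr 1; ext m
      rw [Real.norm_eq_abs, abs_mul, abs_of_nonneg (by positivity : (0:ℝ) ≤ p * q ^ m)]
    rw [this] at habs
    linarith
  -- pointwise bound for the centred third moment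
  have hpoint : ∀ n : ℕ, |Real.log ((n : ℝ) + 1) - μ| ^ 3 * (p * q ^ n)
      ≤ (4 * B n ^ 3 + 864) * (p * q ^ n) := by
    intro n
    have h1 : |Real.log ((n : ℝ) + 1) - μ| ≤ B n + 6 := by
      have : Real.log ((n : ℝ) + 1) - μ
          = Real.log (((n : ℝ) + 1) * p) - (μ + Real.log p) := by
        rw [hlogsplit n]; ring
      rw [this]
      calc |Real.log (((n : ℝ) + 1) * p) - (μ + Real.log p)|
          ≤ |Real.log (((n : ℝ) + 1) * p)| + |μ + Real.log p| := abs_sub _ _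
        _ ≤ B n + 6 := by rw [hBdef]; exact add_le_add le_rfl hmean
    have h2 : |Real.log ((n : ℝ) + 1) - μ| ^ 3 ≤ (B n + 6) ^ 3 :=
      pow_le_pow_left₀ (abs_nonneg _) h1 3
    have h3 : (B n + 6) ^ 3 ≤ 4 * B n ^ 3 + 864 := by
      nlinarith [mul_nonneg (sq_nonneg (B n - 6)) (by linarith [hBnonneg n] : (0:ℝ) ≤ B n + 6)]
    have := le_trans h2 h3
    exact mul_le_mul_of_nonneg_right this (by positivity)
  have hsummaj : Summable (fun n : ℕ => (4 * B n ^ 3 + 864) * (p * q ^ n)) := by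
    have : (fun n : ℕ => (4 * B n ^ 3 + 864) * (p * q ^ n))
        = fun n : ℕ => 4 * (B n ^ 3 * (p * q ^ n)) + (864 * p) * q ^ n := by
      ext n; ring
    rw [this]
    exact (hsumB3.mul_left _).add (hsumgeo.mul_left _)
  have hsumLHS : Summable (fun n : ℕ => |Real.log ((n : ℝ) + 1) - μ| ^ 3 * (p * q ^ n)) := by
    apply Summable.of_nonneg_of_le (fun n => by positivity) hpoint hsummaj
  calc ∑' n : ℕ, |Real.log ((n : ℝ) + 1) - μ| ^ 3 * (p * q ^ n)
      ≤ ∑' n : ℕ, (4 * B n ^ 3 + 864) * (p * q ^ n) :=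
        Summable.tsum_le_tsum hpoint hsumLHS hsummaj
    _ = 4 * (∑' n : ℕ, B n ^ 3 * (p * q ^ n)) + (864 * p) * ∑' n : ℕ, q ^ n := by
        rw [← tsum_mul_left, ← tsum_mul_left,
          ← Summable.tsum_add (hsumB3.mul_left _) (hsumgeo.mul_left _)]
        congr 1; ext n; ring
    _ ≤ 4 * 648 + (864 * p) * (1 / p) := by
        rw [htsumgeo]
        have h4 : 4 * (∑' n : ℕ, B n ^ 3 * (p * q ^ n)) ≤ 4 * 648 :=
          mul_le_mul_of_nonneg_left htB3 (by norm_num)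
        linarith
    _ = 3456 := by field_simp; norm_num
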